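/- Let g ∈ ℝ₊ⁿ be non-increasing and λ ∈ ℝⁿ with |λ_{π(1)}| ≥ ... ≥ |λ_{π(n)}| for a sorting permutation π. Suppose r ≤ n/2 satisfies |λ_{π(r)}| ≥ ε/e, and |λ_{π(2r)}| ≤ (1 - 1/log n)|λ_{π(r)}|. Then Σ_{i=1}^{n} g_i |λ_{π(i)}| - Σ_{i=1}^{n-2r} g_i |λ_{π(2r+i)}| ≥ (ε/(2e log n)) · (2r) · g_{2r}. -/

import Mathlib

open Finset

/-- "S̃ move" potential decrease (Case 2): `g` is nonnegative and non-increasing,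
`a i = |λ_{π(i)}|` is the non-increasing sequence of absolute eigenvalues (1-based
indexing), `r ≤ n/2` satisfies `a r ≥ ε/e` and `a (2r) ≤ (1 - 1/log n) a r`. Then zeroing
out the `2r` largest absolute eigenvalues decreases the potential by at least
`(ε/(2e log n)) · 2r · g_{2r}`. -/
theorem potential_St_move (n r : ℕ) (ε : ℝ) (g a : ℕ → ℝ)
    (hn : 2 ≤ n) (hlog : 1 < Real.log n)
    (hg0 : ∀ i, 0 ≤ g i) (hganti : ∀ i j : ℕ, i ≤ j → g j ≤ g i)
    (ha0 : ∀ i, 0 ≤ a i) (haanti : ∀ i j : ℕ, i ≤ j → a j ≤ a i)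
    (hε : 0 < ε) (hr : 1 ≤ r) (hrn : 2 * r ≤ n)
    (h1 : ε / Real.exp 1 ≤ a r)
    (h2 : a (2 * r) ≤ (1 - 1 / Real.log n) * a r) :
    ε / (2 * Real.exp 1 * Real.log n) * (2 * r) * g (2 * r) ≤
      (∑ i ∈ Finset.Icc 1 n, g i * a i) -
        ∑ i ∈ Finset.Icc 1 (n - 2 * r), g i * a (2 * r + i) := by
  have he : (0:ℝ) < Real.exp 1 := Real.exp_pos 1
  have hL : (0:ℝ) < Real.log n := lt_trans one_pos hlog
  set L := Real.log n with hLdef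
  set m := min r (n - 2 * r) with hm
  have hm1 : m ≤ n - 2 * r := min_le_right _ _
  have hm2 : m ≤ r := min_le_left _ _
  have hgap : a r / L ≤ a r - a (2 * r) := by
    have h : (1 - 1 / L) * a r = a r - a r / L := by ring
    rw [h] at h2; linarith
  have hgapn : 0 ≤ a r / L := div_nonneg (ha0 r) hL.le
  -- rewrite Icc as Ioc
  have e1 : ∀ k : ℕ, Finset.Icc 1 k = Finset.Ioc 0 k := by
    intro k; ext i; simp; omega
  rw [e1, e1]
  have hsplit : (∑ i ∈ Finset.Ioc 0 n, g i * a i) =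
      (∑ i ∈ Finset.Ioc 0 (n - 2 * r), g i * a i) +
        ∑ i ∈ Finset.Ioc (n - 2 * r) n, g i * a i := by
    rw [Finset.sum_Ioc_consecutive _ (Nat.zero_le _) (by omega)]
  rw [hsplit]
  have hD : (∑ i ∈ Finset.Ioc 0 (n - 2 * r), g i * a i) -
      (∑ i ∈ Finset.Ioc 0 (n - 2 * r), g i * a (2 * r + i)) =
      ∑ i ∈ Finset.Ioc 0 (n - 2 * r), g i * (a i - a (2 * r + i)) := by
    rw [← Finset.sum_sub_distrib]; congr 1; ext i; ring
  -- bound 1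
  have hb1 : (m : ℝ) * (g (2 * r) * (a r / L)) ≤
      ∑ i ∈ Finset.Ioc 0 (n - 2 * r), g i * (a i - a (2 * r + i)) := by
    calc (m : ℝ) * (g (2 * r) * (a r / L))
        = ∑ _i ∈ Finset.Ioc 0 m, g (2 * r) * (a r / L) := by
          rw [Finset.sum_const, Nat.card_Ioc, Nat.sub_zero, nsmul_eq_mul]
      _ ≤ ∑ i ∈ Finset.Ioc 0 m, g i * (a i - a (2 * r + i)) := by
          apply Finset.sum_le_sum
          intro i hi
          simp only [Finset.mem_Ioc] at hi
          have hir : i ≤ r := le_trans hi.2 hm2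
          have hga : g (2 * r) ≤ g i := hganti i (2 * r) (by omega)
          have haa : a r / L ≤ a i - a (2 * r + i) := by
            have := haanti i r hir
            have := haanti (2 * r) (2 * r + i) (by omega)
            linarith
          exact mul_le_mul hga haa hgapn (hg0 i)
      _ ≤ ∑ i ∈ Finset.Ioc 0 (n - 2 * r), g i * (a i - a (2 * r + i)) := by
          apply Finset.sum_le_sum_of_subset_of_nonneg
          · apply Finset.Ioc_subset_Ioc le_rfl hm1
          · intro i hi _
            simp only [Finset.mem_Ioc] at hi
            have : a (2 * r + i) ≤ a i := haanti i (2 * r + i) (by omega)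
            exact mul_nonneg (hg0 i) (by linarith)
  -- bound 2
  have hb2 : ((r - m : ℕ) : ℝ) * (g (2 * r) * a r) ≤
      ∑ i ∈ Finset.Ioc (n - 2 * r) n, g i * a i := by
    calc ((r - m : ℕ) : ℝ) * (g (2 * r) * a r)
        = ∑ _i ∈ Finset.Ioc m r, g (2 * r) * a r := by
          rw [Finset.sum_const, Nat.card_Ioc, nsmul_eq_mul]
      _ ≤ ∑ i ∈ Finset.Ioc m r, g i * a i := by
          apply Finset.sum_le_sum
          intro i hi
          simp only [Finset.mem_Ioc] at hi
          have hga : g (2 * r) ≤ g i := hganti i (2 * r) (by omega)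
          have haa : a r ≤ a i := haanti i r hi.2
          exact mul_le_mul hga haa (ha0 r) (hg0 i)
      _ ≤ ∑ i ∈ Finset.Ioc (n - 2 * r) n, g i * a i := by
          apply Finset.sum_le_sum_of_subset_of_nonneg
          · intro i hi
            simp only [Finset.mem_Ioc] at hi ⊢
            omega
          · intro i hi _
            exact mul_nonneg (hg0 i) (ha0 i)
  -- final arithmetic
  have hrm : ((r - m : ℕ) : ℝ) = (r : ℝ) - (m : ℝ) := by
    rw [Nat.cast_sub hm2]
  have htar : ε / (2 * Real.exp 1 * L) * (2 * r) * g (2 * r) =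
      (ε / Real.exp 1 / L) * r * g (2 * r) := by
    field_simp
  have hKL : ε / Real.exp 1 / L ≤ a r / L :=
    div_le_div_of_nonneg_right h1 hL.le
  have hAL : a r / L ≤ a r := div_le_self (ha0 r) hlog.le
  have hmn : (0:ℝ) ≤ (m:ℝ) := Nat.cast_nonneg _
  have hrmn : (0:ℝ) ≤ (r:ℝ) - (m:ℝ) := by
    rw [← hrm]; exact Nat.cast_nonneg _
  rw [htar]
  rw [hrm] at hb2
  have hP : 0 ≤ g (2 * r) := hg0 _
  have f1 : 0 ≤ (m:ℝ) * g (2 * r) * (a r / L - ε / Real.exp 1 / L) :=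
    mul_nonneg (mul_nonneg hmn hP) (by linarith)
  have f2 : 0 ≤ ((r:ℝ) - (m:ℝ)) * g (2 * r) * (a r - ε / Real.exp 1 / L) :=
    mul_nonneg (mul_nonneg hrmn hP) (by linarith)
  nlinarith [hb1, hb2, hD, f1, f2]
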